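/- Let A > 1, K_1, K_2 > 0, a_1 > 0, a_2 = A·a_1, and n, p nonnegative integers with p ≥ 1. Then the period formula for the type II bimodal solution with m = p, namely T = (a_1(1+K_1+K_2)+(a_2-a_1)(1-K_1))/(1-p(K_1-1)+n(1+K_1+K_2)), equals the period formula for the unimodal solution with m = p-1, namely T' = (a_1(1+K_1+K_2)+(a_2-a_1)K_2)/(1+pK_2+n(1+K_1+K_2)), when K_1 = L_{np-1} := (A-1)/(p-n(A-1)) - (1+K_2), provided p - n(A-1) > 0 and both denominators are nonzero. -/

import Mathlib

theorem stmt_13 (a1 a2 A K1 K2 : ℝ) (n p : ℕ)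
    (hA : 1 < A) (hK1 : 0 < K1) (hK2 : 0 < K2)
    (ha1 : 0 < a1) (ha2 : a2 = A * a1) (hp : 1 ≤ p)
    (hpn : 0 < (p : ℝ) - (n : ℝ) * (A - 1))
    (hK1eq : K1 = (A - 1) / ((p : ℝ) - (n : ℝ) * (A - 1)) - (1 + K2))
    (hd1 : 1 - (p : ℝ) * (K1 - 1) + (n : ℝ) * (1 + K1 + K2) ≠ 0)
    (hd2 : 1 + (p : ℝ) * K2 + (n : ℝ) * (1 + K1 + K2) ≠ 0) :
    (a1 * (1 + K1 + K2) + (a2 - a1) * (1 - K1)) /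
      (1 - (p : ℝ) * (K1 - 1) + (n : ℝ) * (1 + K1 + K2)) =
    (a1 * (1 + K1 + K2) + (a2 - a1) * K2) /
      (1 + (p : ℝ) * K2 + (n : ℝ) * (1 + K1 + K2)) := by
  subst hK1eq ha2
  rw [div_eq_div_iff (by exact fun h => hd1 h) (by exact fun h => hd2 h)]
  have hne : ((p : ℝ) - (A - 1) * (n : ℝ)) ≠ 0 := by intro h; linarith
  field_simp at *
  ring_nf
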